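/- Assume ‖x_i‖₂ ≤ 1 for all i, ‖J_{W₀,x_i}‖_F ≤ C₀ for all i (a constant), and λ_min(G_{W₀}) ≥ (3/4) λ₀ with λ₀ > 0. Then there exists a constant C' > 0, depending only on ℓ, β, C₀, such that if M ≥ C' n² R²/λ₀², then for every W ∈ B(R): ‖G_W − G_{W₀}‖₂ ≤ λ₀/4; in particular G_W is invertible with least eigenvalue at least λ₀/2 and ‖G_W^{-1}‖₂ ≤ 2/λ₀. -/

import Mathlib

open Matrix

/-- Euclidean norm of a real vector. -/
noncomputable def eNorm {n : Type*} [Fintype n] (v : n → ℝ) : ℝ :=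
  Real.sqrt (∑ i, v i ^ 2)

/-- Frobenius norm of a real matrix. -/
noncomputable def frobNorm {m n : Type*} [Fintype m] [Fintype n] (A : Matrix m n ℝ) : ℝ :=
  Real.sqrt (∑ i, ∑ j, A i j ^ 2)

/-- Spectral (ℓ²-operator) norm of a real matrix. -/
noncomputable def specNorm {m n : Type*} [Fintype m] [Fintype n] [DecidableEq n]
    (A : Matrix m n ℝ) : ℝ :=
  ‖LinearMap.toContinuousLinearMap (Matrix.toEuclideanLin A)‖

/-- The gradient `J_{W,x} = ∂f(W,x)/∂W = (1/√M)(σ'(Wx) ∘ a) xᵀ ∈ ℝ^{M×d}`. -/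
noncomputable def jacSingle (M d : ℕ) (σ' : ℝ → ℝ) (a : Fin M → ℝ)
    (W : Fin M → Fin d → ℝ) (x : Fin d → ℝ) : Matrix (Fin M) (Fin d) ℝ :=
  Matrix.of fun r j => (Real.sqrt M)⁻¹ * (σ' (W r ⬝ᵥ x) * a r) * x j

/-- The stacked Jacobian `𝐉_W ∈ ℝ^{n×(Md)}`, row `i` being `vec(J_{W,x_i})ᵀ`. -/
noncomputable def jacStack (M d n : ℕ) (σ' : ℝ → ℝ) (a : Fin M → ℝ)
    (x : Fin n → Fin d → ℝ) (W : Fin M → Fin d → ℝ) :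
    Matrix (Fin n) (Fin M × Fin d) ℝ :=
  Matrix.of fun i rj => jacSingle M d σ' a W (x i) rj.1 rj.2

/-- The Gram matrix `G_W = 𝐉_W 𝐉_Wᵀ ∈ ℝ^{n×n}`. -/
noncomputable def gramStack (M d n : ℕ) (σ' : ℝ → ℝ) (a : Fin M → ℝ)
    (x : Fin n → Fin d → ℝ) (W : Fin M → Fin d → ℝ) : Matrix (Fin n) (Fin n) ℝ :=
  jacStack M d n σ' a x W * (jacStack M d n σ' a x W)ᵀ

lemma cs_dot {ι : Type*} [Fintype ι] (v w : ι → ℝ) :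
    |∑ i, v i * w i| ≤ Real.sqrt (∑ i, v i ^ 2) * Real.sqrt (∑ i, w i ^ 2) := by
  have h := Finset.sum_mul_sq_le_sq_mul_sq Finset.univ v w
  calc |∑ i, v i * w i| = Real.sqrt ((∑ i, v i * w i) ^ 2) := (Real.sqrt_sq_eq_abs _).symm
    _ ≤ Real.sqrt ((∑ i, v i ^ 2) * ∑ i, w i ^ 2) := Real.sqrt_le_sqrt h
    _ = _ := Real.sqrt_mul (by positivity) _

lemma euclid_norm_symm {n : Type*} [Fintype n] (w : n → ℝ) :
    ‖(WithLp.equiv 2 (n → ℝ)).symm w‖ = Real.sqrt (∑ i, w i ^ 2) := by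
  rw [EuclideanSpace.norm_eq]
  congr 1
  refine Finset.sum_congr rfl fun i _ => ?_
  simp [Real.norm_eq_abs, sq_abs]

lemma mulVec_sqrt_le {m n : Type*} [Fintype m] [Fintype n] [DecidableEq n]
    (A : Matrix m n ℝ) (v : n → ℝ) :
    Real.sqrt (∑ i, (A.mulVec v) i ^ 2) ≤ specNorm A * Real.sqrt (∑ i, v i ^ 2) := by
  have h := (LinearMap.toContinuousLinearMap (Matrix.toEuclideanLin A)).le_opNorm
    ((WithLp.equiv 2 (n → ℝ)).symm v)
  simpa [EuclideanSpace.norm_eq, Real.norm_eq_abs, sq_abs, specNorm] using h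

lemma specNorm_le_bound {m n : Type*} [Fintype m] [Fintype n] [DecidableEq n]
    (A : Matrix m n ℝ) {c : ℝ} (hc : 0 ≤ c)
    (h : ∀ v : n → ℝ, Real.sqrt (∑ i, (A.mulVec v) i ^ 2) ≤ c * Real.sqrt (∑ i, v i ^ 2)) :
    specNorm A ≤ c := by
  refine ContinuousLinearMap.opNorm_le_bound _ hc fun ev => ?_
  have h2 := h ((WithLp.equiv 2 (n → ℝ)) ev)
  have he : (WithLp.equiv 2 (n → ℝ)).symm ((WithLp.equiv 2 (n → ℝ)) ev) = ev :=
    (WithLp.equiv 2 (n → ℝ)).symm_apply_apply ev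
  calc ‖LinearMap.toContinuousLinearMap (Matrix.toEuclideanLin A) ev‖
      = Real.sqrt (∑ i, (A.mulVec ((WithLp.equiv 2 (n → ℝ)) ev)) i ^ 2) := by
        rw [← he]; simp only [LinearMap.coe_toContinuousLinearMap',
          WithLp.equiv_symm_apply, Matrix.toEuclideanLin_apply_piLp_toLp, euclid_norm_symm]
        simp [EuclideanSpace.norm_eq, Real.norm_eq_abs, sq_abs]
    _ ≤ c * Real.sqrt (∑ i, ((WithLp.equiv 2 (n → ℝ)) ev) i ^ 2) := h2
    _ = c * ‖ev‖ := by rw [← euclid_norm_symm, he]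

lemma quad_abs_le {n : Type*} [Fintype n] [DecidableEq n] (A : Matrix n n ℝ) (v : n → ℝ) :
    |v ⬝ᵥ A.mulVec v| ≤ specNorm A * ∑ i, v i ^ 2 := by
  have h1 : |v ⬝ᵥ A.mulVec v| ≤ Real.sqrt (∑ i, v i ^ 2) *
      Real.sqrt (∑ i, (A.mulVec v) i ^ 2) := cs_dot v (A.mulVec v)
  have h2 := mulVec_sqrt_le A v
  have hs : 0 ≤ Real.sqrt (∑ i, v i ^ 2) := Real.sqrt_nonneg _
  calc |v ⬝ᵥ A.mulVec v| ≤ Real.sqrt (∑ i, v i ^ 2) * (specNorm A * Real.sqrt (∑ i, v i ^ 2)) :=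
        h1.trans (mul_le_mul_of_nonneg_left h2 hs)
    _ = specNorm A * (Real.sqrt (∑ i, v i ^ 2) * Real.sqrt (∑ i, v i ^ 2)) := by ring
    _ = specNorm A * ∑ i, v i ^ 2 := by
        rw [Real.mul_self_sqrt (by positivity)]

lemma specNorm_le_frobNorm {m n : Type*} [Fintype m] [Fintype n] [DecidableEq n]
    (A : Matrix m n ℝ) : specNorm A ≤ frobNorm A := by
  refine specNorm_le_bound A (Real.sqrt_nonneg _) fun v => ?_
  have key : ∑ i, (A.mulVec v) i ^ 2 ≤ (∑ i, ∑ j, A i j ^ 2) * ∑ j, v j ^ 2 := by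
    rw [Finset.sum_mul]
    refine Finset.sum_le_sum fun i _ => ?_
    exact Finset.sum_mul_sq_le_sq_mul_sq Finset.univ (A i) v
  calc Real.sqrt (∑ i, (A.mulVec v) i ^ 2)
      ≤ Real.sqrt ((∑ i, ∑ j, A i j ^ 2) * ∑ j, v j ^ 2) := Real.sqrt_le_sqrt key
    _ = frobNorm A * Real.sqrt (∑ j, v j ^ 2) := Real.sqrt_mul (by positivity) _

lemma gram_apply (M d n : ℕ) (σ' : ℝ → ℝ) (a : Fin M → ℝ)
    (x : Fin n → Fin d → ℝ) (W : Fin M → Fin d → ℝ) (i k : Fin n) :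
    gramStack M d n σ' a x W i k =
      ((M : ℝ))⁻¹ * ((∑ r, σ' (W r ⬝ᵥ x i) * σ' (W r ⬝ᵥ x k) * (a r) ^ 2) * (x i ⬝ᵥ x k)) := by
  have hM : Real.sqrt M * Real.sqrt M = (M : ℝ) := Real.mul_self_sqrt (Nat.cast_nonneg M)
  simp only [gramStack, mul_apply, transpose_apply, jacStack, jacSingle, of_apply,
    Fintype.sum_prod_type, dotProduct, Finset.mul_sum, Finset.sum_mul]
  rw [Finset.sum_comm]
  refine Finset.sum_congr rfl fun r _ => Finset.sum_congr rfl fun j _ => ?_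
  rw [← hM]
  field_simp
  rw [Real.sqrt_sq (Real.sqrt_nonneg _)]

set_option maxHeartbeats 1000000 in
/-- Stability of the Gram matrix in the optimization scope: under the
stated hypotheses at `W₀`, there is `C' > 0` depending only on `ℓ, β, C₀` such that if
`M ≥ C' n² R²/λ₀²`, then every `W` with `‖W − W₀‖_F ≤ R` satisfies
`‖G_W − G_{W₀}‖₂ ≤ λ₀/4`; in particular `G_W` is invertible with least eigenvalue at least
`λ₀/2` and `‖G_W⁻¹‖₂ ≤ 2/λ₀`. -/
theorem gram_stability_in_scope (ℓ β C₀ : ℝ) :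
    ∃ C' : ℝ, 0 < C' ∧
      ∀ (M d n : ℕ) (σ σ' : ℝ → ℝ),
        (∀ t : ℝ, HasDerivAt σ (σ' t) t) →
        (∀ t : ℝ, |σ' t| ≤ ℓ) →
        (∀ s t : ℝ, |σ' s - σ' t| ≤ β * |s - t|) →
        ∀ (a : Fin M → ℝ), (∀ r, a r = 1 ∨ a r = -1) →
        ∀ x : Fin n → Fin d → ℝ, (∀ i, eNorm (x i) ≤ 1) →
        ∀ W₀ : Fin M → Fin d → ℝ,
          (∀ i, frobNorm (jacSingle M d σ' a W₀ (x i)) ≤ C₀) →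
        ∀ lam₀ : ℝ, 0 < lam₀ →
          (∀ v : Fin n → ℝ,
            (3 / 4 : ℝ) * lam₀ * ∑ i, v i ^ 2 ≤
              v ⬝ᵥ (gramStack M d n σ' a x W₀).mulVec v) →
        ∀ R : ℝ, 0 ≤ R →
          C' * n ^ 2 * R ^ 2 / lam₀ ^ 2 ≤ (M : ℝ) →
          ∀ W : Fin M → Fin d → ℝ, frobNorm (Matrix.of W - Matrix.of W₀) ≤ R →
            specNorm (gramStack M d n σ' a x W - gramStack M d n σ' a x W₀) ≤ lam₀ / 4 ∧
            (∀ v : Fin n → ℝ,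
              (lam₀ / 2) * ∑ i, v i ^ 2 ≤ v ⬝ᵥ (gramStack M d n σ' a x W).mulVec v) ∧
            IsUnit (gramStack M d n σ' a x W) ∧
            specNorm (gramStack M d n σ' a x W)⁻¹ ≤ 2 / lam₀ := by
  refine ⟨64 * (ℓ * β) ^ 2 + 1, by positivity, ?_⟩
  intro M d n σ σ' _ hℓb hβb a ha x hx W₀ _ lam₀ hlam hG₀ R hR hM W hW
  have hℓ : 0 ≤ ℓ := (abs_nonneg _).trans (hℓb 0)
  have hβ : 0 ≤ β := by
    have h := hβb 0 1
    have h0 : (0 : ℝ) ≤ |σ' 0 - σ' 1| := abs_nonneg _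
    simp only [zero_sub, abs_neg, abs_one, mul_one] at h
    linarith
  set G := gramStack M d n σ' a x W with hGdef
  set G₀ := gramStack M d n σ' a x W₀ with hG₀def
  -- row distances
  set D : Fin M → ℝ := fun r => Real.sqrt (∑ j, (W r j - W₀ r j) ^ 2) with hDdef
  have hDnn : ∀ r, 0 ≤ D r := fun r => Real.sqrt_nonneg _
  have hDsum : ∑ r, D r ≤ Real.sqrt M * R := by
    have h1 : (∑ r, D r) ^ 2 ≤ (M : ℝ) * (R ^ 2) := by
      have hcs := Finset.sum_mul_sq_le_sq_mul_sq Finset.univ (fun _ : Fin M => (1 : ℝ)) D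
      simp only [one_mul, one_pow] at hcs
      have hDsq : ∑ r, D r ^ 2 ≤ R ^ 2 := by
        have hfr : ∑ r, ∑ j, (W r j - W₀ r j) ^ 2 ≤ R ^ 2 := by
          have h0 : (0 : ℝ) ≤ ∑ r, ∑ j, (W r j - W₀ r j) ^ 2 := by positivity
          have hs : Real.sqrt (∑ r, ∑ j, (W r j - W₀ r j) ^ 2) ≤ R := by
            have : frobNorm (Matrix.of W - Matrix.of W₀) =
                Real.sqrt (∑ r, ∑ j, (W r j - W₀ r j) ^ 2) := by
              simp [frobNorm, Matrix.sub_apply]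
            linarith [hW, this.symm.le, this.le]
          calc ∑ r, ∑ j, (W r j - W₀ r j) ^ 2
              = Real.sqrt (∑ r, ∑ j, (W r j - W₀ r j) ^ 2) ^ 2 := (Real.sq_sqrt h0).symm
            _ ≤ R ^ 2 := by
                have := Real.sqrt_nonneg (∑ r, ∑ j, (W r j - W₀ r j) ^ 2)
                nlinarith
        refine le_trans (le_of_eq ?_) hfr
        refine Finset.sum_congr rfl fun r _ => ?_
        exact Real.sq_sqrt (by positivity)
      have hcs' : (∑ r, D r) ^ 2 ≤ (M : ℝ) * ∑ r, D r ^ 2 := by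
        calc (∑ r, D r) ^ 2 ≤ ((Finset.univ : Finset (Fin M)).card : ℝ) * ∑ r, D r ^ 2 := by
              simpa using hcs
          _ = (M : ℝ) * ∑ r, D r ^ 2 := by simp
      exact hcs'.trans (mul_le_mul_of_nonneg_left hDsq (Nat.cast_nonneg M))
    calc ∑ r, D r = Real.sqrt ((∑ r, D r) ^ 2) := by
          rw [Real.sqrt_sq (Finset.sum_nonneg fun r _ => hDnn r)]
      _ ≤ Real.sqrt ((M : ℝ) * R ^ 2) := Real.sqrt_le_sqrt h1
      _ = Real.sqrt M * R := by
          rw [Real.sqrt_mul (Nat.cast_nonneg M), Real.sqrt_sq hR]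
  have hxd : ∀ i k : Fin n, |x i ⬝ᵥ x k| ≤ 1 := by
    intro i k
    have h1 := cs_dot (x i) (x k)
    have h2 : Real.sqrt (∑ j, x i j ^ 2) * Real.sqrt (∑ j, x k j ^ 2) ≤ 1 := by
      have hi := hx i
      have hk := hx k
      simp only [eNorm] at hi hk
      nlinarith [Real.sqrt_nonneg (∑ j, x i j ^ 2), Real.sqrt_nonneg (∑ j, x k j ^ 2)]
    exact h1.trans h2
  have hrow : ∀ (r : Fin M) (i k : Fin n),
      |σ' (W r ⬝ᵥ x i) * σ' (W r ⬝ᵥ x k) - σ' (W₀ r ⬝ᵥ x i) * σ' (W₀ r ⬝ᵥ x k)| ≤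
        2 * ℓ * β * D r := by
    intro r i k
    have hdiff : ∀ z : Fin n, |W r ⬝ᵥ x z - W₀ r ⬝ᵥ x z| ≤ D r := by
      intro z
      have h1 : W r ⬝ᵥ x z - W₀ r ⬝ᵥ x z = ∑ j, (W r j - W₀ r j) * x z j := by
        simp [dotProduct, Finset.sum_sub_distrib, sub_mul]
      rw [h1]
      have h2 := cs_dot (fun j => W r j - W₀ r j) (x z)
      have h3 : Real.sqrt (∑ j, x z j ^ 2) ≤ 1 := hx z
      calc |∑ j, (W r j - W₀ r j) * x z j| ≤ D r * Real.sqrt (∑ j, x z j ^ 2) := h2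
        _ ≤ D r * 1 := mul_le_mul_of_nonneg_left h3 (hDnn r)
        _ = D r := mul_one _
    have hbe : |σ' (W r ⬝ᵥ x k) - σ' (W₀ r ⬝ᵥ x k)| ≤ β * D r :=
      (hβb _ _).trans (mul_le_mul_of_nonneg_left (hdiff k) hβ)
    have hac : |σ' (W r ⬝ᵥ x i) - σ' (W₀ r ⬝ᵥ x i)| ≤ β * D r :=
      (hβb _ _).trans (mul_le_mul_of_nonneg_left (hdiff i) hβ)
    have hkey : σ' (W r ⬝ᵥ x i) * σ' (W r ⬝ᵥ x k) - σ' (W₀ r ⬝ᵥ x i) * σ' (W₀ r ⬝ᵥ x k) =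
        σ' (W r ⬝ᵥ x i) * (σ' (W r ⬝ᵥ x k) - σ' (W₀ r ⬝ᵥ x k)) +
        σ' (W₀ r ⬝ᵥ x k) * (σ' (W r ⬝ᵥ x i) - σ' (W₀ r ⬝ᵥ x i)) := by ring
    rw [hkey]
    have hbD : 0 ≤ β * D r := mul_nonneg hβ (hDnn r)
    calc |σ' (W r ⬝ᵥ x i) * (σ' (W r ⬝ᵥ x k) - σ' (W₀ r ⬝ᵥ x k)) +
          σ' (W₀ r ⬝ᵥ x k) * (σ' (W r ⬝ᵥ x i) - σ' (W₀ r ⬝ᵥ x i))|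
        ≤ |σ' (W r ⬝ᵥ x i)| * |σ' (W r ⬝ᵥ x k) - σ' (W₀ r ⬝ᵥ x k)| +
          |σ' (W₀ r ⬝ᵥ x k)| * |σ' (W r ⬝ᵥ x i) - σ' (W₀ r ⬝ᵥ x i)| := by
          rw [← abs_mul, ← abs_mul]; exact abs_add_le _ _
      _ ≤ ℓ * (β * D r) + ℓ * (β * D r) :=
          add_le_add (mul_le_mul (hℓb _) hbe (abs_nonneg _) hℓ)
            (mul_le_mul (hℓb _) hac (abs_nonneg _) hℓ)
      _ = 2 * ℓ * β * D r := by ring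
  set K : ℝ := (M : ℝ)⁻¹ * (2 * ℓ * β * (Real.sqrt M * R)) with hKdef
  have hKnn : 0 ≤ K := by positivity
  have hK : ∀ i k : Fin n, |(G - G₀) i k| ≤ K := by
    intro i k
    have ha2 : ∀ r, (a r) ^ 2 = 1 := fun r => by
      rcases ha r with h | h <;> rw [h] <;> norm_num
    have hGik : (G - G₀) i k = (M : ℝ)⁻¹ *
        ((∑ r, (σ' (W r ⬝ᵥ x i) * σ' (W r ⬝ᵥ x k) -
          σ' (W₀ r ⬝ᵥ x i) * σ' (W₀ r ⬝ᵥ x k))) * (x i ⬝ᵥ x k)) := by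
      rw [Matrix.sub_apply, hGdef, hG₀def, _root_.gram_apply, _root_.gram_apply,
        ← mul_sub, ← sub_mul, ← Finset.sum_sub_distrib]
      congr 2
      refine Finset.sum_congr rfl fun r _ => ?_
      rw [ha2 r]; ring
    rw [hGik, abs_mul, abs_mul, abs_of_nonneg (inv_nonneg.mpr (Nat.cast_nonneg M) :
      (0:ℝ) ≤ (M:ℝ)⁻¹), hKdef]
    refine mul_le_mul_of_nonneg_left ?_ (inv_nonneg.mpr (Nat.cast_nonneg M))
    have h1 : |∑ r, (σ' (W r ⬝ᵥ x i) * σ' (W r ⬝ᵥ x k) -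
        σ' (W₀ r ⬝ᵥ x i) * σ' (W₀ r ⬝ᵥ x k))| ≤ 2 * ℓ * β * (Real.sqrt M * R) := by
      calc |∑ r, (σ' (W r ⬝ᵥ x i) * σ' (W r ⬝ᵥ x k) -
          σ' (W₀ r ⬝ᵥ x i) * σ' (W₀ r ⬝ᵥ x k))|
          ≤ ∑ r, |σ' (W r ⬝ᵥ x i) * σ' (W r ⬝ᵥ x k) -
            σ' (W₀ r ⬝ᵥ x i) * σ' (W₀ r ⬝ᵥ x k)| := Finset.abs_sum_le_sum_abs _ _
        _ ≤ ∑ r, 2 * ℓ * β * D r := Finset.sum_le_sum fun r _ => hrow r i k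
        _ = 2 * ℓ * β * ∑ r, D r := by rw [Finset.mul_sum]
        _ ≤ 2 * ℓ * β * (Real.sqrt M * R) :=
            mul_le_mul_of_nonneg_left hDsum (by positivity)
    calc |∑ r, (σ' (W r ⬝ᵥ x i) * σ' (W r ⬝ᵥ x k) -
        σ' (W₀ r ⬝ᵥ x i) * σ' (W₀ r ⬝ᵥ x k))| * |x i ⬝ᵥ x k|
        ≤ (2 * ℓ * β * (Real.sqrt M * R)) * 1 :=
          mul_le_mul h1 (hxd i k) (abs_nonneg _) (by positivity)
      _ = 2 * ℓ * β * (Real.sqrt M * R) := mul_one _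
  have hfrobΔ : frobNorm (G - G₀) ≤ (n : ℝ) * K := by
    have hsum : ∑ i, ∑ k, ((G - G₀) i k) ^ 2 ≤ (n : ℝ) ^ 2 * K ^ 2 := by
      calc ∑ i, ∑ k, ((G - G₀) i k) ^ 2 ≤ ∑ _i : Fin n, ∑ _k : Fin n, K ^ 2 := by
            refine Finset.sum_le_sum fun i _ => Finset.sum_le_sum fun k _ => ?_
            have := abs_le.mp (hK i k)
            exact sq_le_sq' this.1 this.2
        _ = (n : ℝ) ^ 2 * K ^ 2 := by simp [Finset.sum_const]; ring
    calc frobNorm (G - G₀) ≤ Real.sqrt ((n : ℝ) ^ 2 * K ^ 2) := Real.sqrt_le_sqrt hsum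
      _ = (n : ℝ) * K := by
          rw [show ((n : ℝ) ^ 2 * K ^ 2) = ((n : ℝ) * K) ^ 2 by ring,
            Real.sqrt_sq (by positivity)]
  have hnK : (n : ℝ) * K ≤ lam₀ / 4 := by
    rcases Nat.eq_zero_or_pos M with hM0 | hMpos
    · rw [hKdef, hM0]
      norm_num
      positivity
    · have hMr : (0 : ℝ) < M := by exact_mod_cast hMpos
      have hsq : Real.sqrt M * Real.sqrt M = (M : ℝ) := Real.mul_self_sqrt (le_of_lt hMr)
      have h64 : (8 * ℓ * β * n * R) ^ 2 ≤ lam₀ ^ 2 * M := by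
        have hl2 : (0 : ℝ) < lam₀ ^ 2 := by positivity
        rw [div_le_iff₀ hl2] at hM
        nlinarith [sq_nonneg ((n : ℝ) * R)]
      have h8 : 8 * ℓ * β * n * R ≤ lam₀ * Real.sqrt M := by
        have hlhs : (0 : ℝ) ≤ 8 * ℓ * β * n * R := by positivity
        calc 8 * ℓ * β * n * R = Real.sqrt ((8 * ℓ * β * n * R) ^ 2) :=
              (Real.sqrt_sq hlhs).symm
          _ ≤ Real.sqrt (lam₀ ^ 2 * M) := Real.sqrt_le_sqrt h64
          _ = lam₀ * Real.sqrt M := by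
              rw [Real.sqrt_mul (by positivity), Real.sqrt_sq hlam.le]
      have heq : (n : ℝ) * K = ((n : ℝ) * (2 * ℓ * β * (Real.sqrt M * R))) / M := by
        rw [hKdef]; ring
      rw [heq, div_le_iff₀ hMr]
      nlinarith [mul_le_mul_of_nonneg_right h8 (Real.sqrt_nonneg M), hsq]
  have hspec : specNorm (G - G₀) ≤ lam₀ / 4 :=
    (specNorm_le_frobNorm _).trans (hfrobΔ.trans hnK)
  have hq : ∀ v : Fin n → ℝ, (lam₀ / 2) * ∑ i, v i ^ 2 ≤ v ⬝ᵥ G.mulVec v := by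
    intro v
    have habs : |v ⬝ᵥ (G - G₀).mulVec v| ≤ lam₀ / 4 * ∑ i, v i ^ 2 :=
      (quad_abs_le _ v).trans
        (mul_le_mul_of_nonneg_right hspec (by positivity))
    have hsplit : v ⬝ᵥ (G - G₀).mulVec v = v ⬝ᵥ G.mulVec v - v ⬝ᵥ G₀.mulVec v := by
      rw [sub_mulVec, dotProduct_sub]
    have h0 := hG₀ v
    have h1 := (abs_le.mp habs).1
    rw [hsplit] at h1
    linarith
  have hherm : G.IsHermitian := by
    have : Gᴴ = G := by
      ext i k
      simp only [conjTranspose_apply, star_trivial]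
      rw [hGdef, _root_.gram_apply, _root_.gram_apply, dotProduct_comm (x k) (x i)]
      congr 2
      exact Finset.sum_congr rfl fun r _ => by ring
    exact this
  have hpd : G.PosDef := by
    refine Matrix.PosDef.of_dotProduct_mulVec_pos hherm fun z hz => ?_
    have hzsum : 0 < ∑ i, z i ^ 2 := by
      obtain ⟨i, hi⟩ := Function.ne_iff.mp hz
      exact Finset.sum_pos' (fun j _ => sq_nonneg _)
        ⟨i, Finset.mem_univ i, pow_two_pos_of_ne_zero hi⟩
    have := hq z
    have hlt : 0 < z ⬝ᵥ G.mulVec z :=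
      lt_of_lt_of_le (mul_pos (by positivity : (0:ℝ) < lam₀ / 2) hzsum) this
    simpa [star_trivial] using hlt
  refine ⟨hspec, hq, hpd.isUnit, ?_⟩
  refine specNorm_le_bound _ (by positivity) fun w => ?_
  set u := G⁻¹.mulVec w with hu
  have hGu : G.mulVec u = w := by
    rw [hu, mulVec_mulVec, Matrix.mul_nonsing_inv _
      ((Matrix.isUnit_iff_isUnit_det _).mp hpd.isUnit), one_mulVec]
  have h1 : lam₀ / 2 * ∑ i, u i ^ 2 ≤ u ⬝ᵥ w := by
    have := hq u
    rwa [hGu] at this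
  have h2 : u ⬝ᵥ w ≤ Real.sqrt (∑ i, u i ^ 2) * Real.sqrt (∑ i, w i ^ 2) :=
    (le_abs_self _).trans (cs_dot u w)
  set s := Real.sqrt (∑ i, u i ^ 2) with hs
  set t := Real.sqrt (∑ i, w i ^ 2) with ht
  have hsnn : 0 ≤ s := Real.sqrt_nonneg _
  have htnn : 0 ≤ t := Real.sqrt_nonneg _
  have hss : s * s = ∑ i, u i ^ 2 := Real.mul_self_sqrt (by positivity)
  have h4 : lam₀ / 2 * s ≤ t := by
    rcases eq_or_lt_of_le hsnn with h | h
    · rw [← h]; simpa using htnn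
    · have h3 : lam₀ / 2 * s * s ≤ t * s := by
        rw [mul_assoc, hss]
        exact h1.trans (h2.trans (le_of_eq (mul_comm s t)))
      exact le_of_mul_le_mul_right h3 h
  calc s = 2 / lam₀ * (lam₀ / 2 * s) := by field_simp
    _ ≤ 2 / lam₀ * t := mul_le_mul_of_nonneg_left h4 (by positivity)
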